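/- Let S be a subset of ω₁. If S is closed in ω₁ and unbounded, then K(S) has a subset with no upper bound and add(K(S)) = ω₁ (every countable subset of K(S) is bounded in K(S), and some subset of size ω₁ is unbounded). If S is not closed in ω₁, then add(K(S)) = ω (some countable subset of K(S) is unbounded in K(S)). -/

import Mathlib

open Cardinal Set

universe u v

/-- `C` is cofinal for `P'` in `P`: every element of `P'` lies below some element of `C`. -/
def IsCofinalFor' {P : Type u} [Preorder P] (P' C : Set P) : Prop :=
  ∀ p ∈ P', ∃ c ∈ C, p ≤ c

/-- `φ : P → Q` is a relative Tukey quotient from `(P', P)` to `(Q', Q)`: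
it maps every subset of `P` cofinal for `P'` to a subset of `Q` cofinal for `Q'`. -/
def IsRelTukeyQuotient {P : Type u} {Q : Type v} [Preorder P] [Preorder Q]
    (P' : Set P) (Q' : Set Q) (φ : P → Q) : Prop :=
  ∀ C : Set P, IsCofinalFor' P' C → IsCofinalFor' Q' (φ '' C)

/-- `(P', P) ≥_T (Q', Q)`: there exists a relative Tukey quotient. -/
def RelTukeyGE {P : Type u} {Q : Type v} [Preorder P] [Preorder Q]
    (P' : Set P) (Q' : Set Q) : Prop :=
  ∃ φ : P → Q, IsRelTukeyQuotient P' Q' φ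

/-- `P ≥_T Q`: there is a Tukey quotient from `P` to `Q`. -/
def TukeyGE (P : Type u) (Q : Type v) [Preorder P] [Preorder Q] : Prop :=
  RelTukeyGE (Set.univ : Set P) (Set.univ : Set Q)

/-- `A` is unbounded in `P`: it has no upper bound in `P`. -/
def UnboundedIn {P : Type u} [Preorder P] (A : Set P) : Prop :=
  ¬ ∃ b : P, ∀ a ∈ A, a ≤ b

noncomputable section

/-- `ω₁`: the set of countable ordinals, as the canonical well-order of order type `ω₁`. -/
def O1 : Type := (Cardinal.aleph 1).ord.ToType

noncomputable instance : LinearOrder O1 :=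
  inferInstanceAs (LinearOrder (Cardinal.aleph 1).ord.ToType)

/-- `ω₁` carries its order topology. -/
instance : TopologicalSpace O1 := Preorder.topology O1

instance : OrderTopology O1 := ⟨rfl⟩

/-- `K(S)` for `S ⊆ ω₁`: the compact subsets of `S` (equivalently, compact subsets of `ω₁`
contained in `S`), ordered by inclusion. -/
def KS (S : Set O1) : Type := {K : Set O1 // K ⊆ S ∧ IsCompact K}

instance (S : Set O1) : PartialOrder (KS S) := Subtype.partialOrder _

/-- `A ⊆ ω₁` is bounded in `ω₁`. -/
def BddO1 (A : Set O1) : Prop := ∃ β : O1, ∀ x ∈ A, x ≤ β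

/-- `add(P)`: the least cardinality of a subset of `P` unbounded in `P`. -/
noncomputable def addOf (P : Type u) [Preorder P] : Cardinal.{u} :=
  sInf {c : Cardinal.{u} | ∃ A : Set P, UnboundedIn A ∧ #↥A = c}

/-! ### Auxiliary facts about `O1` -/

instance : Nonempty O1 :=
  Ordinal.toType_nonempty_iff_ne_zero.2 (by
    simp only [ne_eq, Cardinal.ord_eq_zero]
    exact ((Cardinal.aleph0_pos).trans_le (Cardinal.aleph0_le_aleph 1)).ne')

instance : WellFoundedLT O1 := inferInstanceAs (WellFoundedLT (Cardinal.aleph 1).ord.ToType)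

noncomputable instance : OrderBot O1 where
  bot := (IsWellFounded.wf (α := O1) (r := (· < ·))).min univ univ_nonempty
  bot_le a := not_lt.1 (WellFounded.not_lt_min _ _ (mem_univ a))

noncomputable instance : ConditionallyCompleteLinearOrderBot O1 :=
  WellFoundedLT.conditionallyCompleteLinearOrderBot O1

theorem O1.mk_eq : #O1 = ℵ₁ := by
  show #((Cardinal.aleph 1).ord.ToType) = _
  rw [Cardinal.mk_toType, Cardinal.card_ord]

theorem O1.mk_Iio_lt (x : O1) : #(Iio x) < ℵ₁ := Cardinal.mk_Iio_ord_toType x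

theorem O1.bdd_of_countable (A : Set O1) (hA : #↥A ≤ ℵ₀) : ∃ β : O1, ∀ a ∈ A, a ≤ β := by
  let e := Ordinal.ToType.mk (o := (Cardinal.aleph 1).ord)
  let f : A → Ordinal := fun a => (e.symm a.1).1
  have hlt : ∀ a : A, f a < (Cardinal.aleph 1).ord := fun a => (e.symm a.1).2
  have hcard : #A < ((Cardinal.aleph 1).ord).cof := by
    rw [Cardinal.isRegular_aleph_one.cof_eq]
    exact hA.trans_lt Cardinal.aleph0_lt_aleph_one
  have hsup : iSup f < (Cardinal.aleph 1).ord := Ordinal.iSup_lt_ord hcard hlt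
  refine ⟨e ⟨iSup f, hsup⟩, fun a ha => ?_⟩
  have h1 : e.symm a ≤ ⟨iSup f, hsup⟩ := by
    show (e.symm a).1 ≤ iSup f
    exact Ordinal.le_iSup f ⟨a, ha⟩
  have := e.monotone h1
  exact (e.apply_symm_apply a).symm.trans_le this

theorem O1.no_max (x : O1) : ∃ y : O1, x < y := by
  by_contra h
  push_neg at h
  have h1 : (univ : Set O1) ⊆ insert x (Iio x) := fun y _ => by
    rcases lt_or_eq_of_le (h y) with h' | h'
    · exact Or.inr h'
    · exact Or.inl h'
  have h2 : #O1 ≤ #↥(insert x (Iio x) : Set O1) := by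
    rw [← Cardinal.mk_univ (α := O1)]
    exact Cardinal.mk_le_mk_of_subset h1
  have h4 : #↥(Iio x) ≤ ℵ₀ := by
    have := O1.mk_Iio_lt x
    rwa [← Cardinal.succ_aleph0, Order.lt_succ_iff] at this
  have h5 : #↥(insert x (Iio x) : Set O1) ≤ ℵ₀ :=
    Cardinal.mk_insert_le.trans (Cardinal.add_le_aleph0.2 ⟨h4, Cardinal.one_le_aleph0⟩)
  have h6 := h2.trans h5
  rw [O1.mk_eq] at h6
  exact absurd h6 Cardinal.aleph0_lt_aleph_one.not_ge

theorem O1.isCompact_of_isClosed_bdd {C : Set O1} (hC : IsClosed C) {β : O1}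
    (h : ∀ x ∈ C, x ≤ β) : IsCompact C :=
  (isCompact_Icc (a := (⊥ : O1)) (b := β)).of_isClosed_subset hC fun x hx => ⟨bot_le, h x hx⟩

theorem lt_aleph_one_le {c : Cardinal} (h : c < ℵ₁) : c ≤ ℵ₀ := by
  rwa [← Cardinal.succ_aleph0, Order.lt_succ_iff] at h

/-- For `S ⊆ ω₁`: if `S` is closed in `ω₁` and unbounded then `K(S)` has an unbounded subset
and `add(K(S)) = ω₁` (every countable subset of `K(S)` is bounded and some subset of size `ω₁`
is unbounded); if `S` is not closed in `ω₁` then `add(K(S)) = ω` (some countable subset of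
`K(S)` is unbounded). -/
theorem statement11 (S : Set O1) :
    (IsClosed S → ¬ BddO1 S →
      (∃ A : Set (KS S), UnboundedIn A) ∧ addOf (KS S) = Cardinal.aleph 1 ∧
        (∀ A : Set (KS S), #↥A ≤ ℵ₀ → ∃ b : KS S, ∀ a ∈ A, a ≤ b) ∧
        (∃ A : Set (KS S), #↥A = Cardinal.aleph 1 ∧ UnboundedIn A)) ∧
      (¬ IsClosed S →
        addOf (KS S) = ℵ₀ ∧ ∃ A : Set (KS S), #↥A ≤ ℵ₀ ∧ UnboundedIn A) := by
  constructor
  · -- S closed and unbounded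
    intro hcl hunb
    -- every countable subset of K(S) is bounded
    have key : ∀ A : Set (KS S), #↥A ≤ ℵ₀ → ∃ b : KS S, ∀ a ∈ A, a ≤ b := by
      intro A hA
      have hbdd : ∀ a : A, ∃ β : O1, ∀ x ∈ (a.1.1 : Set O1), x ≤ β := by
        intro a
        rcases a.1.2.2.bddAbove with ⟨β, hβ⟩
        exact ⟨β, fun x hx => hβ hx⟩
      choose g hg using hbdd
      obtain ⟨β, hβ⟩ := O1.bdd_of_countable (range g) (Cardinal.mk_range_le.trans hA)
      refine ⟨⟨S ∩ Iic β, inter_subset_left,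
        O1.isCompact_of_isClosed_bdd (hcl.inter isClosed_Iic) (fun x hx => hx.2)⟩, ?_⟩
      intro a ha
      show a.1 ⊆ S ∩ Iic β
      intro x hx
      exact ⟨a.2.1 hx, (hg ⟨a, ha⟩ x hx).trans (hβ _ (mem_range_self _))⟩
    -- S has size ℵ₁
    have hSmk : #↥S = ℵ₁ := by
      refine le_antisymm (O1.mk_eq ▸ Cardinal.mk_set_le S) ?_
      by_contra hlt
      push_neg at hlt
      exact hunb (O1.bdd_of_countable S (lt_aleph_one_le hlt))
    -- the family of singletons
    let sing : S → KS S := fun x =>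
      ⟨{x.1}, singleton_subset_iff.2 x.2, isCompact_singleton⟩
    have hinj : Function.Injective sing := by
      intro a b hab
      have : ({a.1} : Set O1) = {b.1} := congrArg Subtype.val hab
      exact Subtype.ext (singleton_eq_singleton_iff.1 this)
    have hA₁mk : #↥(range sing) = ℵ₁ := by
      rw [Cardinal.mk_range_eq sing hinj, hSmk]
    have hA₁unb : UnboundedIn (range sing) := by
      rintro ⟨b, hb⟩
      apply hunb
      rcases b.2.2.bddAbove with ⟨β, hβ⟩
      refine ⟨β, fun x hx => hβ ?_⟩
      have hsub : (sing ⟨x, hx⟩).1 ⊆ b.1 := hb (sing ⟨x, hx⟩) (mem_range_self _)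
      exact hsub (mem_singleton x)
    have hmem : ℵ₁ ∈ {c : Cardinal | ∃ A : Set (KS S), UnboundedIn A ∧ #↥A = c} :=
      ⟨range sing, hA₁unb, hA₁mk⟩
    have hlb : ∀ c ∈ {c : Cardinal | ∃ A : Set (KS S), UnboundedIn A ∧ #↥A = c}, ℵ₁ ≤ c := by
      rintro c ⟨A, hAunb, rfl⟩
      by_contra hlt
      push_neg at hlt
      exact hAunb (key A (lt_aleph_one_le hlt))
    refine ⟨⟨range sing, hA₁unb⟩, ?_, key, ⟨range sing, hA₁mk, hA₁unb⟩⟩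
    exact le_antisymm (csInf_le' hmem) (le_csInf ⟨_, hmem⟩ hlb)
  · -- S not closed
    intro hnc
    have hns : ¬ closure S ⊆ S := fun h => hnc (isClosed_of_closure_subset h)
    obtain ⟨x, hxc, hxS⟩ := not_subset.1 hns
    obtain ⟨z, hz⟩ := O1.no_max x
    set x' := (IsWellFounded.wf (α := O1) (r := (· < ·))).min (Ioi x) ⟨z, hz⟩ with hx'def
    have hxx' : x < x' := WellFounded.min_mem _ (Ioi x) ⟨z, hz⟩
    have hx'min : ∀ w, x < w → x' ≤ w := fun w hw =>
      not_lt.1 (WellFounded.not_lt_min _ (Ioi x) hw)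
    set T := S ∩ Iio x with hTdef
    have hTne : T.Nonempty := by
      obtain ⟨s, hs1, hs2⟩ := mem_closure_iff.1 hxc (Iio x') isOpen_Iio hxx'
      have hsle : s ≤ x := not_lt.1 fun h => absurd (hx'min s h) (not_le.2 hs1)
      have hne : s ≠ x := fun h => hxS (h ▸ hs2)
      exact ⟨s, hs2, lt_of_le_of_ne hsle hne⟩
    have hTlub : IsLUB T x := by
      constructor
      · exact fun t ht => le_of_lt ht.2
      · intro y hy
        by_contra hyx
        push_neg at hyx
        obtain ⟨s, hs⟩ := mem_closure_iff.1 hxc (Ioo y x') isOpen_Ioo ⟨hyx, hxx'⟩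
        have hsx : s < x := by
          have h1 : s ≤ x := not_lt.1 fun h => absurd (hx'min s h) (not_le.2 hs.1.2)
          exact lt_of_le_of_ne h1 (fun h => hxS (h ▸ hs.2))
        exact absurd (hy ⟨hs.2, hsx⟩) (not_le.2 hs.1.1)
    have hTc : #↥T ≤ ℵ₀ :=
      lt_aleph_one_le ((Cardinal.mk_le_mk_of_subset
        (inter_subset_right : T ⊆ Iio x)).trans_lt (O1.mk_Iio_lt x))
    let sing2 : T → KS S := fun t =>
      ⟨{t.1}, singleton_subset_iff.2 t.2.1, isCompact_singleton⟩
    have hAc : #↥(range sing2) ≤ ℵ₀ := Cardinal.mk_range_le.trans hTc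
    have hunbA : UnboundedIn (range sing2) := by
      rintro ⟨b, hb⟩
      have hTb : T ⊆ b.1 := by
        intro t ht
        have hsub : (sing2 ⟨t, ht⟩).1 ⊆ b.1 := hb (sing2 ⟨t, ht⟩) (mem_range_self _)
        exact hsub (mem_singleton t)
      have hxb : x ∈ b.1 :=
        closure_minimal hTb b.2.2.isClosed (hTlub.mem_closure hTne)
      exact hxS (b.2.1 hxb)
    -- finite subsets of K(S) are bounded
    have keyfin : ∀ A : Set (KS S), A.Finite → ∃ b : KS S, ∀ a ∈ A, a ≤ b := by
      intro A hA
      refine ⟨⟨⋃ a ∈ A, a.1, iUnion₂_subset fun a _ => a.2.1,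
        hA.isCompact_biUnion (fun a _ => a.2.2)⟩, ?_⟩
      intro a ha
      show a.1 ⊆ _
      exact subset_biUnion_of_mem ha
    have hinfty : ∀ c ∈ {c : Cardinal | ∃ A : Set (KS S), UnboundedIn A ∧ #↥A = c},
        ℵ₀ ≤ c := by
      rintro c ⟨A, hAunb, rfl⟩
      by_contra h
      push_neg at h
      have hfin : A.Finite := by
        rw [← Cardinal.lt_aleph0_iff_set_finite]
        exact h
      exact hAunb (keyfin A hfin)
    have hmemA : ℵ₀ ∈ {c : Cardinal | ∃ A : Set (KS S), UnboundedIn A ∧ #↥A = c} := by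
      refine ⟨range sing2, hunbA, le_antisymm hAc ?_⟩
      exact hinfty _ ⟨range sing2, hunbA, rfl⟩
    refine ⟨?_, range sing2, hAc, hunbA⟩
    exact le_antisymm (csInf_le' hmemA) (le_csInf ⟨_, hmemA⟩ hinfty)
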